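/- Open determinacy (Gale–Stewart): for every open subset W of Baire space ℕ^ℕ (with the product topology, ℕ discrete), the two-player game with payoff W is determined: either Player 1 has a winning strategy or Player 2 has a winning strategy. -/

import Mathlib

/-- The history (list of the first `n` moves) of the play in which Player 1 follows
strategy `σ` (moving at even-length, i.e. even, stages) and Player 2 follows
strategy `τ` (moving at odd stages). -/
def hist (σ τ : List ℕ → ℕ) : ℕ → List ℕ
  | 0 => []
  | n + 1 => hist σ τ n ++ [if n % 2 = 0 then σ (hist σ τ n) else τ (hist σ τ n)]

/-- The play determined by strategies `σ` (for Player 1) and `τ` (for Player 2):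
`play σ τ (2k) = σ ⟨p 0, …, p (2k-1)⟩` and `play σ τ (2k+1) = τ ⟨p 0, …, p (2k)⟩`. -/
def play (σ τ : List ℕ → ℕ) (n : ℕ) : ℕ :=
  if n % 2 = 0 then σ (hist σ τ n) else τ (hist σ τ n)

namespace OpenDet

/-- History of the subgame starting from position `s`. -/
def histFrom (σ τ : List ℕ → ℕ) (s : List ℕ) : ℕ → List ℕ
  | 0 => s
  | n + 1 =>
    histFrom σ τ s n ++
      [if (histFrom σ τ s n).length % 2 = 0 then σ (histFrom σ τ s n)
        else τ (histFrom σ τ s n)]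

lemma length_histFrom (σ τ : List ℕ → ℕ) (s : List ℕ) (k : ℕ) :
    (histFrom σ τ s k).length = s.length + k := by
  induction k with
  | zero => rfl
  | succ k ih => simp [histFrom, ih]; omega

lemma prefix_histFrom (σ τ : List ℕ → ℕ) (s : List ℕ) {k m : ℕ} (h : k ≤ m) :
    histFrom σ τ s k <+: histFrom σ τ s m := by
  induction m with
  | zero => simp [Nat.le_zero.mp h]
  | succ m ih =>
    rcases Nat.lt_or_ge k (m+1) with h' | h'
    · exact (ih (by omega)).trans ⟨_, rfl⟩
    · have : k = m + 1 := by omega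
      simp [this]

lemma self_prefix_histFrom (σ τ : List ℕ → ℕ) (s : List ℕ) (k : ℕ) :
    s <+: histFrom σ τ s k := prefix_histFrom σ τ s (Nat.zero_le k)

lemma histFrom_add (σ τ : List ℕ → ℕ) (s : List ℕ) (a b : ℕ) :
    histFrom σ τ s (a + b) = histFrom σ τ (histFrom σ τ s a) b := by
  induction b with
  | zero => rfl
  | succ b ih => simp [← Nat.add_assoc, histFrom, ih]

/-- If two strategies for Player 1 agree on all positions extending `s`, the
subgame histories from `s` coincide. -/
lemma histFrom_congr {σ σ' τ : List ℕ → ℕ} {s : List ℕ}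
    (h : ∀ t, s <+: t → σ t = σ' t) (k : ℕ) :
    histFrom σ τ s k = histFrom σ' τ s k := by
  induction k with
  | zero => rfl
  | succ k ih =>
    have hp : s <+: histFrom σ τ s k := self_prefix_histFrom σ τ s k
    simp [histFrom, ih, h _ (ih ▸ hp)]

/-- The infinite play of the subgame starting from `s`. -/
def fseq (σ τ : List ℕ → ℕ) (s : List ℕ) (i : ℕ) : ℕ :=
  (histFrom σ τ s (i + 1))[i]!

lemma prefix_getElem! {l t : List ℕ} (h : l <+: t) {i : ℕ} (hi : i < l.length) :
    t[i]! = l[i]! := by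
  have hi' : i < t.length := lt_of_lt_of_le hi h.length_le
  rw [getElem!_pos l i hi, getElem!_pos t i hi', h.getElem hi]

lemma fseq_stable (σ τ : List ℕ → ℕ) (s : List ℕ) {i k : ℕ}
    (h : i < s.length + k) : (histFrom σ τ s k)[i]! = fseq σ τ s i := by
  rw [fseq]
  rcases Nat.le_total (i+1) k with h' | h'
  · exact prefix_getElem! (prefix_histFrom σ τ s h') (by rw [length_histFrom]; omega)
  · exact (prefix_getElem! (prefix_histFrom σ τ s h')
      (by rw [length_histFrom]; omega)).symm

lemma fseq_shift (σ τ : List ℕ → ℕ) (s : List ℕ) (a i : ℕ) :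
    fseq σ τ (histFrom σ τ s a) i = fseq σ τ s i := by
  rw [fseq, ← histFrom_add]
  exact fseq_stable σ τ s (by omega)

lemma fseq_prefix_val (σ τ : List ℕ → ℕ) (s : List ℕ) {i : ℕ} (hi : i < s.length) :
    fseq σ τ s i = s[i]! := by
  have := fseq_stable σ τ s (i := i) (k := 0) (by omega)
  rw [← this]; rfl

/-- Player 1 has a winning strategy in the subgame starting from `s`. -/
def P1wins (W : Set (ℕ → ℕ)) (s : List ℕ) : Prop :=
  ∃ σ, ∀ τ, fseq σ τ s ∈ W

lemma L1 {W : Set (ℕ → ℕ)} {s : List ℕ} (hs : s.length % 2 = 0) {n : ℕ}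
    (h : P1wins W (s ++ [n])) : P1wins W s := by
  obtain ⟨σ₁, hσ₁⟩ := h
  refine ⟨fun t => if t = s then n else σ₁ t, fun τ => ?_⟩
  set σ' : List ℕ → ℕ := fun t => if t = s then n else σ₁ t with hσ'
  have h1 : histFrom σ' τ s 1 = s ++ [n] := by simp [histFrom, hs, hσ']
  have hagree : ∀ t, (s ++ [n]) <+: t → σ' t = σ₁ t := by
    intro t ht
    have : t ≠ s := by
      intro he; have := ht.length_le; simp [he] at this
    simp [hσ', this]
  have key : ∀ i, fseq σ' τ s i = fseq σ₁ τ (s ++ [n]) i := by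
    intro i
    rw [← fseq_shift σ' τ s 1 i, h1, fseq, fseq,
      histFrom_congr hagree (i+1)]
  have heq : fseq σ' τ s = fseq σ₁ τ (s ++ [n]) := funext key
  rw [heq]; exact hσ₁ τ

lemma L2 {W : Set (ℕ → ℕ)} {s : List ℕ} (hs : s.length % 2 = 1)
    (h : ∀ n, P1wins W (s ++ [n])) : P1wins W s := by
  choose σf hσf using h
  refine ⟨fun t => if ht : s.length < t.length then σf t[s.length]! t else 0, fun τ => ?_⟩
  set σ' : List ℕ → ℕ :=
    fun t => if ht : s.length < t.length then σf t[s.length]! t else 0 with hσ'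
  set n := τ s with hn
  have h1 : histFrom σ' τ s 1 = s ++ [n] := by
    simp [histFrom, hs, hn]
  have hagree : ∀ t, (s ++ [n]) <+: t → σ' t = σf n t := by
    intro t ht
    have hl : s.length < t.length := by
      have := ht.length_le; simp at this; omega
    have he : t[s.length]! = n := by
      rw [prefix_getElem! ht (by simp)]
      rw [getElem!_pos _ _ (by simp)]
      simp
    rw [getElem!_pos t _ hl] at he
    simp [hσ', hl, he]
  have key : ∀ i, fseq σ' τ s i = fseq (σf n) τ (s ++ [n]) i := by
    intro i
    rw [← fseq_shift σ' τ s 1 i, h1, fseq, fseq, histFrom_congr hagree (i+1)]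
  have heq : fseq σ' τ s = fseq (σf n) τ (s ++ [n]) := funext key
  rw [heq]; exact hσf n τ

lemma hist_eq (σ τ : List ℕ → ℕ) (k : ℕ) : hist σ τ k = histFrom σ τ [] k := by
  induction k with
  | zero => rfl
  | succ k ih =>
    have hl : (histFrom σ τ [] k).length = k := by simp [length_histFrom]
    simp [hist, histFrom, ih, hl]

lemma play_eq (σ τ : List ℕ → ℕ) : play σ τ = fseq σ τ [] := by
  funext i
  have hl : (hist σ τ i).length = i := by rw [hist_eq, length_histFrom]; simp
  have h1 : hist σ τ (i+1)
      = hist σ τ i ++ [if i % 2 = 0 then σ (hist σ τ i) else τ (hist σ τ i)] := rfl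
  have h2 : i < (hist σ τ (i+1)).length := by rw [hist_eq, length_histFrom]; simp
  rw [fseq, ← hist_eq, getElem!_pos (hist σ τ (i+1)) i h2]
  simp only [play, h1]
  rw [List.getElem_append_right (by omega)]
  simp [hl]

end OpenDet

open OpenDet in
/-- open determinacy, Gale–Stewart.  Every Gale–Stewart game on ℕ
with open payoff set `W ⊆ ℕ^ℕ` is determined: either Player 1 has a winning strategy,
or Player 2 has a winning strategy. -/
theorem open_determinacy (W : Set (ℕ → ℕ)) (hW : IsOpen W) :
    (∃ σ : List ℕ → ℕ, ∀ τ : List ℕ → ℕ, play σ τ ∈ W) ∨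
    (∃ τ : List ℕ → ℕ, ∀ σ : List ℕ → ℕ, play σ τ ∉ W) := by
  by_cases h0 : P1wins W []
  · left
    obtain ⟨σ, hσ⟩ := h0
    exact ⟨σ, fun τ => by rw [play_eq]; exact hσ τ⟩
  · right
    classical
    refine ⟨fun t => if h : ∃ n, ¬ P1wins W (t ++ [n]) then h.choose else 0, fun σ => ?_⟩
    set τ : List ℕ → ℕ :=
      fun t => if h : ∃ n, ¬ P1wins W (t ++ [n]) then h.choose else 0 with hτ
    -- invariant
    have hlen : ∀ k, (hist σ τ k).length = k := by
      intro k; rw [hist_eq]; simp [length_histFrom]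
    have inv : ∀ k, ¬ P1wins W (hist σ τ k) := by
      intro k
      induction k with
      | zero => exact h0
      | succ k ih =>
        rcases Nat.even_or_odd k with hk | hk
        · have hk2 : k % 2 = 0 := Nat.even_iff.mp hk
          intro hc
          have hstep : hist σ τ (k+1)
              = hist σ τ k ++ [if k % 2 = 0 then σ (hist σ τ k) else τ (hist σ τ k)] := rfl
          rw [hstep, hk2, if_pos rfl] at hc
          exact ih (L1 (by rw [hlen]; exact hk2) hc)
        · have hk2 : k % 2 = 1 := Nat.odd_iff.mp hk
          have hex : ∃ n, ¬ P1wins W (hist σ τ k ++ [n]) := by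
            by_contra hc
            push_neg at hc
            exact ih (L2 (by rw [hlen]; exact hk2) hc)
          have hmv : τ (hist σ τ k) = hex.choose := dif_pos hex
          have hstep : hist σ τ (k+1)
              = hist σ τ k ++ [if k % 2 = 0 then σ (hist σ τ k) else τ (hist σ τ k)] := rfl
          rw [hstep, hk2]
          simpa [hmv] using hex.choose_spec
    -- suppose the play lies in W
    intro hp
    obtain ⟨I, u, hu, hIu⟩ := (isOpen_pi_iff.mp hW) (play σ τ) hp
    set N := (I.sup id) + 1 with hN
    have hcyl : ∀ g : ℕ → ℕ, (∀ i < N, g i = play σ τ i) → g ∈ W := by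
      intro g hg
      apply hIu
      intro i hi
      have : i ≤ I.sup id := Finset.le_sup (f := id) hi
      rw [hg i (by omega)]
      exact (hu i hi).2
    set s := hist σ τ N with hsdef
    apply inv N
    refine ⟨fun _ => 0, fun τ' => ?_⟩
    apply hcyl
    intro i hi
    have hi' : i < s.length := by rw [hsdef, hlen]; exact hi
    rw [fseq_prefix_val _ _ _ hi', hsdef, hist_eq, play_eq,
      fseq_stable σ τ [] (by simpa using hi)]
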